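/- Let G be a group, A ⊆ G a non-empty subset, and p ≥ 1 an integer with e ∈ A^p (the set of products of exactly p elements of A). Let A_e := A ∪ {e}. Then there exists a finite set E ⊆ ⟨A⟩ with |E| ≤ p such that A_e^h ⊆ E · A^h for every h ≥ 1. -/

import Mathlib

open Pointwise

private lemma list_prod_mem_pow' {G : Type*} [Group G] {A : Set G} :
    ∀ (l : List G), (∀ x ∈ l, x ∈ A) → l.prod ∈ A ^ l.length := by
  intro l
  induction l with
  | nil => simp
  | cons a t ih =>
      intro hmem
      simp only [List.prod_cons, List.length_cons, pow_succ']
      exact Set.mul_mem_mul (hmem a List.mem_cons_self)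
        (ih fun x hx => hmem x (List.mem_cons_of_mem _ hx))

private lemma pow_pad' {G : Type*} [Group G] {A : Set G} {p : ℕ}
    (hep : (1 : G) ∈ A ^ p) : ∀ (n m : ℕ), A ^ n ⊆ A ^ (n + m * p) := by
  intro n m
  induction m with
  | zero => simp
  | succ m ih =>
      intro x hx
      have : x * 1 ∈ A ^ (n + m * p) * A ^ p := Set.mul_mem_mul (ih hx) hep
      rw [mul_one, ← pow_add] at this
      have he : n + m * p + p = n + (m + 1) * p := by ring
      rwa [he] at this

private lemma union_pow_subset' {G : Type*} [Group G] {A : Set G} :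
    ∀ (h : ℕ) (x : G), x ∈ (A ∪ {1}) ^ h → ∃ k ≤ h, x ∈ A ^ k := by
  intro h
  induction h with
  | zero => intro x hx; exact ⟨0, le_refl 0, hx⟩
  | succ h ih =>
      intro x hx
      rw [pow_succ'] at hx
      obtain ⟨a, ha, y, hy, rfl⟩ := hx
      obtain ⟨k, hk, hyk⟩ := ih y hy
      rcases ha with ha | ha
      · exact ⟨k + 1, by omega, by rw [pow_succ']; exact Set.mul_mem_mul ha hyk⟩
      · rw [Set.mem_singleton_iff] at ha
        subst ha
        exact ⟨k, by omega, by simpa using hyk⟩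

theorem stmt_0 {G : Type*} [Group G] (A : Set G) (hA : A.Nonempty)
    (p : ℕ) (hp : 1 ≤ p) (hep : (1 : G) ∈ A ^ p) :
    ∃ E : Finset G, (E : Set G) ⊆ (Subgroup.closure A : Set G) ∧ E.card ≤ p ∧
      ∀ h : ℕ, 1 ≤ h → (A ∪ {1}) ^ h ⊆ (E : Set G) * A ^ h := by
  classical
  -- obtain a list of length p, elements in A, product 1
  obtain ⟨f, hf⟩ := Set.mem_pow.mp hep
  set l : List G := List.ofFn fun i => (f i : G) with hl
  have hlen : l.length = p := by simp [hl]
  have hmem : ∀ x ∈ l, x ∈ A := by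
    intro x hx
    rw [hl, List.mem_ofFn] at hx
    obtain ⟨i, rfl⟩ := hx
    exact (f i).2
  have hprod : l.prod = 1 := hf
  refine ⟨(Finset.range p).image (fun j => (l.drop j).prod), ?_, ?_, ?_⟩
  · intro x hx
    simp only [Finset.coe_image, Set.mem_image, Finset.coe_range, Set.mem_Iio] at hx
    obtain ⟨j, _, rfl⟩ := hx
    exact Subgroup.list_prod_mem _ fun y hy =>
      Subgroup.subset_closure (hmem y (List.mem_of_mem_drop hy))
  · exact (Finset.card_image_le).trans (by simp)
  · intro h hh x hx
    obtain ⟨k, hk, hxk⟩ := union_pow_subset' h x hx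
    set j : ℕ := (h - k) % p with hj
    have hjp : j < p := Nat.mod_lt _ hp
    have htake : (l.take j).prod ∈ A ^ j := by
      have := list_prod_mem_pow' (l.take j) (fun y hy => hmem y (List.mem_of_mem_take hy))
      rwa [List.length_take, hlen, min_eq_left hjp.le] at this
    have hdp : (l.take j).prod * (l.drop j).prod = 1 := by
      rw [← List.prod_append, List.take_append_drop, hprod]
    have hsfx : (l.drop j).prod = ((l.take j).prod)⁻¹ :=
      (inv_eq_of_mul_eq_one_right hdp).symm
    -- the element (l.take j).prod * x lies in A ^ h
    have hmemh : (l.take j).prod * x ∈ A ^ h := by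
      have h1 : (l.take j).prod * x ∈ A ^ (j + k) := by
        rw [pow_add]; exact Set.mul_mem_mul htake hxk
      have h2 : j + k + ((h - k) / p) * p = h := by
        rw [hj, Nat.mul_comm]
        have := Nat.mod_add_div (h - k) p
        omega
      have := pow_pad' hep (j + k) ((h - k) / p) h1
      rwa [h2] at this
    refine ⟨(l.drop j).prod, ?_, (l.take j).prod * x, hmemh, ?_⟩
    · simp only [Finset.coe_image, Set.mem_image, Finset.coe_range, Set.mem_Iio]
      exact ⟨j, hjp, rfl⟩
    · rw [hsfx]; exact inv_mul_cancel_left _ _
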